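/- For every ρ with |ρ| < 1 and every σ̃ > 0, the function f(x) = (1/σ̃)·φ(x/σ̃)·√(2π(1-ρ²))·ψ(-ρx/(√(1-ρ²)·σ̃)) is a probability density, i.e., f ≥ 0 and ∫_{-∞}^{∞} f(x) dx = 1. -/

import Mathlib

open Real MeasureTheory

noncomputable def stdPhi (x : ℝ) : ℝ := (Real.sqrt (2 * Real.pi))⁻¹ * Real.exp (-x ^ 2 / 2)

noncomputable def stdCDF (x : ℝ) : ℝ := ∫ y in Set.Iic x, stdPhi y

noncomputable def psi (x : ℝ) : ℝ := stdPhi x + x * stdCDF x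

noncomputable def peakDensity (ρ σ : ℝ) (x : ℝ) : ℝ :=
  σ⁻¹ * stdPhi (x / σ) * Real.sqrt (2 * Real.pi * (1 - ρ ^ 2)) *
    psi (-ρ * x / (Real.sqrt (1 - ρ ^ 2) * σ))

section Aux

open Filter Set

lemma sqrt2pi_pos : 0 < Real.sqrt (2 * Real.pi) :=
  Real.sqrt_pos.2 (by positivity)

lemma stdPhi_pos (x : ℝ) : 0 < stdPhi x := by
  unfold stdPhi; positivity

lemma stdPhi_le (x : ℝ) : stdPhi x ≤ (Real.sqrt (2 * Real.pi))⁻¹ := by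
  unfold stdPhi
  nth_rewrite 2 [← mul_one ((Real.sqrt (2 * Real.pi))⁻¹)]
  have h1 : Real.exp (-x ^ 2 / 2) ≤ 1 := Real.exp_le_one_iff.2 (by nlinarith [sq_nonneg x])
  exact mul_le_mul_of_nonneg_left h1 (inv_nonneg.2 sqrt2pi_pos.le)

lemma stdPhi_neg (x : ℝ) : stdPhi (-x) = stdPhi x := by simp [stdPhi]

lemma continuous_stdPhi : Continuous stdPhi := by
  unfold stdPhi; continuity

lemma stdPhi_eq (x : ℝ) : stdPhi x = (Real.sqrt (2 * Real.pi))⁻¹ * Real.exp (-(1/2) * x ^ 2) := by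
  unfold stdPhi; congr 1; ring_nf

lemma integrable_stdPhi : Integrable stdPhi := by
  have h : Integrable (fun x : ℝ => (Real.sqrt (2 * Real.pi))⁻¹ * Real.exp (-(1/2) * x ^ 2)) :=
    (integrable_exp_neg_mul_sq (by norm_num)).const_mul _
  exact h.congr (Filter.Eventually.of_forall fun x => (stdPhi_eq x).symm)

lemma integral_stdPhi : (∫ x, stdPhi x) = 1 := by
  simp_rw [stdPhi_eq]
  rw [MeasureTheory.integral_const_mul, integral_gaussian]
  have : π / (1/2) = 2 * π := by ring
  rw [this, inv_mul_cancel₀ sqrt2pi_pos.ne']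

lemma integrable_mul_stdPhi : Integrable (fun x => x * stdPhi x) := by
  have h : Integrable (fun x : ℝ => (Real.sqrt (2 * Real.pi))⁻¹ * (x * Real.exp (-(1/2) * x ^ 2))) :=
    ((integrable_mul_exp_neg_mul_sq (by norm_num)).const_mul _)
  refine h.congr (Filter.Eventually.of_forall fun x => ?_)
  simp only [stdPhi_eq]; ring

lemma hasDerivAt_stdPhi (x : ℝ) : HasDerivAt stdPhi (-x * stdPhi x) x := by
  have h1 : HasDerivAt (fun x : ℝ => -x ^ 2 / 2) (-x) x := by
    have := ((hasDerivAt_pow 2 x).neg).div_const 2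
    simpa using this.congr_deriv (by push_cast; ring)
  have h2 := (h1.exp).const_mul (Real.sqrt (2 * Real.pi))⁻¹
  refine h2.congr_deriv ?_
  unfold stdPhi; ring

lemma tendsto_stdPhi_atTop : Tendsto stdPhi atTop (nhds 0) := by
  have h : Tendsto (fun x : ℝ => -x ^ 2 / 2) atTop atBot := by
    have h0 : Tendsto (fun x : ℝ => x ^ 2) atTop atTop := tendsto_pow_atTop two_ne_zero
    exact (tendsto_neg_atTop_atBot.comp h0).atBot_div_const two_pos
  have h2 := (Real.tendsto_exp_atBot.comp h).const_mul (Real.sqrt (2 * Real.pi))⁻¹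
  have h3 : (fun x : ℝ => (Real.sqrt (2 * Real.pi))⁻¹ * (Real.exp ∘ fun x : ℝ => -x ^ 2 / 2) x)
      = stdPhi := by funext x; simp [stdPhi, Function.comp]
  rw [h3, mul_zero] at h2
  exact h2

lemma tendsto_stdPhi_atBot : Tendsto stdPhi atBot (nhds 0) := by
  have h := tendsto_stdPhi_atTop.comp tendsto_neg_atBot_atTop
  have h3 : stdPhi ∘ Neg.neg = stdPhi := by funext x; exact stdPhi_neg x
  rwa [h3] at h

lemma stdCDF_nonneg (x : ℝ) : 0 ≤ stdCDF x :=
  setIntegral_nonneg measurableSet_Iic fun y _ => (stdPhi_pos y).le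

lemma stdCDF_le_one (x : ℝ) : stdCDF x ≤ 1 := by
  rw [← integral_stdPhi]
  exact setIntegral_le_integral integrable_stdPhi
    (Filter.Eventually.of_forall fun y => (stdPhi_pos y).le)

lemma hasDerivAt_stdCDF (x : ℝ) : HasDerivAt stdCDF (stdPhi x) x := by
  have key : ∀ y : ℝ, stdCDF y = stdCDF 0 + ∫ t in (0:ℝ)..y, stdPhi t := by
    intro y
    have := intervalIntegral.integral_Iic_sub_Iic
      (integrable_stdPhi.integrableOn (s := Iic (0:ℝ)))
      (integrable_stdPhi.integrableOn (s := Iic y))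
    unfold stdCDF
    linarith [this]
  have h : HasDerivAt (fun y => stdCDF 0 + ∫ t in (0:ℝ)..y, stdPhi t) (stdPhi x) x := by
    refine HasDerivAt.const_add _ ?_
    exact intervalIntegral.integral_hasDerivAt_right
      integrable_stdPhi.intervalIntegrable
      continuous_stdPhi.aestronglyMeasurable.stronglyMeasurableAtFilter
      continuous_stdPhi.continuousAt
  exact h.congr_of_eventuallyEq (Filter.Eventually.of_forall key)

lemma continuous_stdCDF : Continuous stdCDF :=
  continuous_iff_continuousAt.2 fun x => (hasDerivAt_stdCDF x).continuousAt

lemma integral_Iic_mul_stdPhi (x : ℝ) : (∫ y in Iic x, y * stdPhi y) = -stdPhi x := by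
  have hderiv : ∀ y ∈ Iic x, HasDerivAt (fun y => -stdPhi y) (y * stdPhi y) y := by
    intro y _
    have := (hasDerivAt_stdPhi y).neg
    exact this.congr_deriv (by ring)
  have hint : IntegrableOn (fun y => y * stdPhi y) (Iic x) := integrable_mul_stdPhi.integrableOn
  have hlim : Tendsto (fun y => -stdPhi y) atBot (nhds 0) := by
    simpa using tendsto_stdPhi_atBot.neg
  have := integral_Iic_of_hasDerivAt_of_tendsto' hderiv hint hlim
  simpa using this

lemma stdCDF_mills {x : ℝ} (hx : x < 0) : stdCDF x ≤ -stdPhi x / x := by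
  have hle : stdCDF x ≤ ∫ y in Iic x, (y / x) * stdPhi y := by
    unfold stdCDF
    refine setIntegral_mono_on integrable_stdPhi.integrableOn
      ?_ measurableSet_Iic fun y hy => ?_
    · have : IntegrableOn (fun y => x⁻¹ * (y * stdPhi y)) (Iic x) :=
        (integrable_mul_stdPhi.const_mul _).integrableOn
      exact this.congr_fun (fun y _ => by ring) measurableSet_Iic
    · have h1 : (1:ℝ) ≤ y / x := by
        rw [le_div_iff_of_neg hx]
        simpa using hy.out
      nth_rewrite 1 [← one_mul (stdPhi y)]
      exact mul_le_mul_of_nonneg_right h1 (stdPhi_pos y).le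
  have heq : (∫ y in Iic x, (y / x) * stdPhi y) = -stdPhi x / x := by
    have : (∫ y in Iic x, (y / x) * stdPhi y) = x⁻¹ * ∫ y in Iic x, y * stdPhi y := by
      rw [← MeasureTheory.integral_const_mul]
      exact setIntegral_congr_fun measurableSet_Iic fun y _ => by ring
    rw [this, integral_Iic_mul_stdPhi]
    field_simp
  linarith [hle, heq.le]

lemma psi_nonneg (x : ℝ) : 0 ≤ psi x := by
  unfold psi
  rcases le_or_gt 0 x with hx | hx
  · have := stdCDF_nonneg x
    have := (stdPhi_pos x).le
    positivity
  · have h := stdCDF_mills hx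
    have h2 : x * stdCDF x ≥ x * (-stdPhi x / x) := mul_le_mul_of_nonpos_left h hx.le
    have h3 : x * (-stdPhi x / x) = -stdPhi x := by rw [mul_comm, div_mul_cancel₀ _ hx.ne]
    linarith [h2, h3.ge]

lemma psi_le (x : ℝ) : psi x ≤ (Real.sqrt (2 * Real.pi))⁻¹ + |x| := by
  unfold psi
  have h1 := stdPhi_le x
  have h2 : x * stdCDF x ≤ |x| := by
    calc x * stdCDF x ≤ |x * stdCDF x| := le_abs_self _
    _ = |x| * |stdCDF x| := abs_mul _ _
    _ ≤ |x| * 1 := by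
        apply mul_le_mul_of_nonneg_left _ (abs_nonneg x)
        rw [abs_of_nonneg (stdCDF_nonneg x)]; exact stdCDF_le_one x
    _ = |x| := mul_one _
  linarith

lemma tendsto_stdCDF_atTop : Tendsto stdCDF atTop (nhds 1) := by
  have h := tendsto_setIntegral_of_monotone (f := stdPhi) (μ := volume)
    (s := fun b : ℝ => Iic b) (fun b => measurableSet_Iic)
    (fun b c hbc => Iic_subset_Iic.2 hbc) (by
      rw [Set.iUnion_Iic]
      exact integrable_stdPhi.integrableOn)
  rw [Set.iUnion_Iic, MeasureTheory.Measure.restrict_univ, integral_stdPhi] at h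
  exact h

lemma tendsto_stdCDF_atBot : Tendsto stdCDF atBot (nhds 0) := by
  have hupper : Tendsto (fun x : ℝ => -(Real.sqrt (2 * Real.pi))⁻¹ / x) atBot (nhds 0) := by
    have h0 : Tendsto (fun x : ℝ => x⁻¹) atBot (nhds 0) := by
      have h1 : Tendsto (fun x : ℝ => (-x)⁻¹) atBot (nhds (0:ℝ)) :=
        Tendsto.comp (g := fun r : ℝ => r⁻¹) tendsto_inv_atTop_zero tendsto_neg_atBot_atTop
      have h2 : Tendsto (fun x : ℝ => -(-x)⁻¹) atBot (nhds (0:ℝ)) := by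
        simpa using h1.neg
      exact h2.congr fun x => by rw [inv_neg, neg_neg]
    have h2 := h0.const_mul (-(Real.sqrt (2 * Real.pi))⁻¹)
    simp only [mul_zero] at h2
    exact h2.congr fun x => by rw [div_eq_mul_inv]
  refine tendsto_of_tendsto_of_tendsto_of_le_of_le' tendsto_const_nhds hupper ?_ ?_
  · exact Filter.Eventually.of_forall stdCDF_nonneg
  · filter_upwards [Filter.eventually_lt_atBot (0:ℝ)] with x hx
    have h := stdCDF_mills hx
    have h2 : -stdPhi x / x ≤ -(Real.sqrt (2 * Real.pi))⁻¹ / x := by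
      rw [div_eq_mul_inv, div_eq_mul_inv]
      exact mul_le_mul_of_nonpos_right (neg_le_neg (stdPhi_le x)) (inv_nonpos.2 hx.le)
    linarith

lemma continuous_psi : Continuous psi :=
  continuous_stdPhi.add (continuous_id.mul continuous_stdCDF)

lemma integral_key (a : ℝ) :
    (∫ u, stdPhi u * psi (-(a * u))) = Real.sqrt (1 + a ^ 2) / Real.sqrt (2 * Real.pi) := by
  set b := Real.sqrt (1 + a ^ 2) with hb_def
  have hb : 0 < b := Real.sqrt_pos.2 (by positivity)
  have hb2 : b ^ 2 = 1 + a ^ 2 := Real.sq_sqrt (by positivity)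
  set c := b / Real.sqrt (2 * Real.pi) with hc_def
  have φid : ∀ u : ℝ, stdPhi (b * u) = Real.sqrt (2 * Real.pi) * (stdPhi u * stdPhi (a * u)) := by
    intro u
    simp only [stdPhi]
    have he : (b * u) ^ 2 = u ^ 2 + (a * u) ^ 2 := by
      rw [mul_pow, hb2]; ring
    rw [he]
    rw [show -(u ^ 2 + (a * u) ^ 2) / 2 = -u ^ 2 / 2 + -(a * u) ^ 2 / 2 by ring, Real.exp_add]
    field_simp
  set F : ℝ → ℝ := fun u =>
    a * (stdPhi u * stdCDF (-(a * u))) + c * stdCDF (b * u) with hF_def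
  have hF : ∀ u, HasDerivAt F (stdPhi u * psi (-(a * u))) u := by
    intro u
    have inner1 : HasDerivAt (fun u : ℝ => -(a * u)) (-a) u := by
      exact (((hasDerivAt_id u).const_mul a).neg).congr_deriv (by ring)
    have inner2 : HasDerivAt (fun u : ℝ => b * u) b u := by
      simpa using (hasDerivAt_id u).const_mul b
    have d1 : HasDerivAt (fun u : ℝ => stdCDF (-(a * u))) (stdPhi (-(a * u)) * (-a)) u :=
      by have := (hasDerivAt_stdCDF (-(a * u))).comp u inner1; exact this
    have d2 : HasDerivAt (fun u : ℝ => stdPhi u * stdCDF (-(a * u)))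
        ((-u * stdPhi u) * stdCDF (-(a * u)) + stdPhi u * (stdPhi (-(a * u)) * (-a))) u :=
      (hasDerivAt_stdPhi u).mul d1
    have d3 : HasDerivAt (fun u : ℝ => stdCDF (b * u)) (stdPhi (b * u) * b) u :=
      (hasDerivAt_stdCDF (b * u)).comp u inner2
    have d4 := (d2.const_mul a).add (d3.const_mul c)
    refine d4.congr_deriv ?_
    have key : c * (stdPhi (b * u) * b) = (1 + a ^ 2) * (stdPhi u * stdPhi (a * u)) := by
      rw [φid u, hc_def]
      rw [show b / Real.sqrt (2 * Real.pi) *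
          (Real.sqrt (2 * Real.pi) * (stdPhi u * stdPhi (a * u)) * b) =
          b ^ 2 * (stdPhi u * stdPhi (a * u)) *
            (Real.sqrt (2 * Real.pi) / Real.sqrt (2 * Real.pi)) from by ring,
        div_self sqrt2pi_pos.ne', mul_one, hb2]
    rw [key]
    simp only [psi, stdPhi_neg]
    ring
  have hbound : ∀ u : ℝ, stdPhi u * psi (-(a * u)) ≤
      (Real.sqrt (2 * Real.pi))⁻¹ * stdPhi u + |a| * |u * stdPhi u| := by
    intro u
    have h1 := psi_le (-(a * u))
    have h2 : stdPhi u * psi (-(a * u)) ≤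
        stdPhi u * ((Real.sqrt (2 * Real.pi))⁻¹ + |(-(a * u))|) :=
      mul_le_mul_of_nonneg_left h1 (stdPhi_pos u).le
    have h3 : stdPhi u * ((Real.sqrt (2 * Real.pi))⁻¹ + |(-(a * u))|) =
        (Real.sqrt (2 * Real.pi))⁻¹ * stdPhi u + |a| * |u * stdPhi u| := by
      rw [abs_neg, abs_mul, abs_mul, abs_of_nonneg (stdPhi_pos u).le]
      ring
    linarith
  have hg_nonneg : ∀ u : ℝ, 0 ≤ stdPhi u * psi (-(a * u)) :=
    fun u => mul_nonneg (stdPhi_pos u).le (psi_nonneg _)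
  have hint : Integrable (fun u => stdPhi u * psi (-(a * u))) := by
    have hmaj : Integrable (fun u : ℝ =>
        (Real.sqrt (2 * Real.pi))⁻¹ * stdPhi u + |a| * |u * stdPhi u|) :=
      (integrable_stdPhi.const_mul _).add ((integrable_mul_stdPhi.abs).const_mul _)
    refine hmaj.mono' ?_ ?_
    · exact (continuous_stdPhi.mul (continuous_psi.comp
        ((continuous_const.mul continuous_id).neg))).aestronglyMeasurable
    · refine Filter.Eventually.of_forall fun u => ?_
      rw [Real.norm_eq_abs, abs_of_nonneg (hg_nonneg u)]
      exact hbound u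
  have hsq1 : Tendsto (fun u : ℝ => stdPhi u * stdCDF (-(a * u))) atTop (nhds 0) := by
    refine tendsto_of_tendsto_of_tendsto_of_le_of_le' tendsto_const_nhds tendsto_stdPhi_atTop
      (Filter.Eventually.of_forall fun u => mul_nonneg (stdPhi_pos u).le (stdCDF_nonneg _))
      (Filter.Eventually.of_forall fun u => ?_)
    exact mul_le_of_le_one_right (stdPhi_pos u).le (stdCDF_le_one _)
  have hsq2 : Tendsto (fun u : ℝ => stdPhi u * stdCDF (-(a * u))) atBot (nhds 0) := by
    refine tendsto_of_tendsto_of_tendsto_of_le_of_le' tendsto_const_nhds tendsto_stdPhi_atBot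
      (Filter.Eventually.of_forall fun u => mul_nonneg (stdPhi_pos u).le (stdCDF_nonneg _))
      (Filter.Eventually.of_forall fun u => ?_)
    exact mul_le_of_le_one_right (stdPhi_pos u).le (stdCDF_le_one _)
  have hmulTop : Tendsto (fun u : ℝ => b * u) atTop atTop :=
    Tendsto.const_mul_atTop hb tendsto_id
  have hmulBot : Tendsto (fun u : ℝ => b * u) atBot atBot :=
    Tendsto.const_mul_atBot hb tendsto_id
  have htop : Tendsto F atTop (nhds c) := by
    have := (hsq1.const_mul a).add ((tendsto_stdCDF_atTop.comp hmulTop).const_mul c)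
    simpa [hF_def, Function.comp] using this
  have hbot : Tendsto F atBot (nhds 0) := by
    have := (hsq2.const_mul a).add ((tendsto_stdCDF_atBot.comp hmulBot).const_mul c)
    simpa [hF_def, Function.comp] using this
  have := integral_of_hasDerivAt_of_tendsto hF hint hbot htop
  rw [this, sub_zero, hc_def]

end Aux

theorem peakDensity_isDensity (ρ σ : ℝ) (hρ : |ρ| < 1) (hσ : 0 < σ) :
    (∀ x, 0 ≤ peakDensity ρ σ x) ∧ (∫ x, peakDensity ρ σ x) = 1 := by
  have hρ2 : ρ ^ 2 < 1 := by
    have h := sq_abs ρ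
    nlinarith [abs_nonneg ρ]
  set s := Real.sqrt (1 - ρ ^ 2) with hs_def
  have hs : 0 < s := Real.sqrt_pos.2 (by linarith)
  have hs2 : s ^ 2 = 1 - ρ ^ 2 := Real.sq_sqrt (by linarith)
  constructor
  · intro x
    apply mul_nonneg
    apply mul_nonneg
    apply mul_nonneg
    · exact inv_nonneg.2 hσ.le
    · exact (stdPhi_pos _).le
    · exact Real.sqrt_nonneg _
    · exact psi_nonneg _
  · set a := ρ / s with ha_def
    have h1 : 1 + a ^ 2 = (s⁻¹) ^ 2 := by
      rw [ha_def, div_pow, inv_pow, hs2]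
      have hne : (1:ℝ) - ρ ^ 2 ≠ 0 := by linarith
      field_simp
      ring
    have h2 : Real.sqrt (1 + a ^ 2) = s⁻¹ := by
      rw [h1, Real.sqrt_sq (inv_nonneg.2 hs.le)]
    have hK : Real.sqrt (2 * Real.pi * (1 - ρ ^ 2)) = Real.sqrt (2 * Real.pi) * s := by
      rw [Real.sqrt_mul (by positivity), hs_def]
    have harg : ∀ x : ℝ, -ρ * x / (s * σ) = -(a * (x / σ)) := by
      intro x
      rw [ha_def]
      field_simp
    have hfun : ∀ x : ℝ, peakDensity ρ σ x =
        (σ⁻¹ * (Real.sqrt (2 * Real.pi) * s)) *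
          ((fun u => stdPhi u * psi (-(a * u))) (x / σ)) := by
      intro x
      simp only [peakDensity, ← hs_def, hK, harg x]
      ring
    calc (∫ x, peakDensity ρ σ x)
        = ∫ x, (σ⁻¹ * (Real.sqrt (2 * Real.pi) * s)) *
            ((fun u => stdPhi u * psi (-(a * u))) (x / σ)) := by
          exact integral_congr_ae (Filter.Eventually.of_forall hfun)
      _ = (σ⁻¹ * (Real.sqrt (2 * Real.pi) * s)) *
            ∫ x, (fun u => stdPhi u * psi (-(a * u))) (x / σ) := by
          rw [MeasureTheory.integral_const_mul]
      _ = (σ⁻¹ * (Real.sqrt (2 * Real.pi) * s)) *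
            (|σ| • ∫ u, stdPhi u * psi (-(a * u))) := by
          rw [MeasureTheory.Measure.integral_comp_div (fun u => stdPhi u * psi (-(a * u))) σ]
      _ = 1 := by
          rw [integral_key, h2, abs_of_pos hσ, smul_eq_mul]
          field_simp
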